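/- For b = 0 and ν < 0, the mass of the regular part of the Feller fundamental solution is deficient: ∫₀^∞ (1/(2t))·(y/ξ)^{ν/2}·e^{−(y+ξ)/(2t)}·I_{|ν|}(√(yξ)/t) dy = γ(−ν, ξ/(2t))/Γ(−ν) < 1 for all t > 0, ξ > 0, where γ is the lower incomplete gamma function and I_{|ν|} is the modified Bessel function of the first kind. -/

import Mathlib

open Real Set MeasureTheory Filter

/-- Modified Bessel function of the first kind of (real) order `μ`. -/
noncomputable def besselI (μ x : ℝ) : ℝ :=
  ∑' r : ℕ, (x / 2) ^ (2 * (r : ℝ) + μ) / ((r.factorial : ℝ) * Real.Gamma ((r : ℝ) + 1 + μ))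

/-- The lower incomplete gamma function `γ(m, z) = ∫₀^z η^(m-1) e^(-η) dη`. -/
noncomputable def lowerGamma (m z : ℝ) : ℝ :=
  ∫ η in (0:ℝ)..z, η ^ (m - 1) * Real.exp (-η)


lemma lg_intble {s : ℝ} (hs : 0 < s) (a b : ℝ) :
    IntervalIntegrable (fun η : ℝ => η ^ (s-1) * Real.exp (-η)) volume a b :=
  (intervalIntegral.intervalIntegrable_rpow' (by linarith)).mul_continuousOn
    (Real.continuous_exp.comp continuous_neg).continuousOn

lemma lg_rec {s z : ℝ} (hs : 0 < s) (hz : 0 < z) :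
    lowerGamma (s+1) z = s * lowerGamma s z - z ^ s * Real.exp (-z) := by
  have key : ∫ η in (0:ℝ)..z, (s * (η ^ (s-1) * Real.exp (-η)) - η ^ s * Real.exp (-η))
      = z ^ s * Real.exp (-z) - (0:ℝ) ^ s * Real.exp (-(0:ℝ)) := by
    apply intervalIntegral.integral_eq_sub_of_hasDeriv_right_of_le hz.le
    · apply ContinuousOn.mul _ (Real.continuous_exp.comp continuous_neg).continuousOn
      intro x hx
      exact (Real.continuousAt_rpow_const x s (Or.inr hs.le)).continuousWithinAt
    · intro x hx
      have hx0 : x ≠ 0 := ne_of_gt hx.1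
      have h1 : HasDerivAt (fun y : ℝ => y ^ s) (s * x ^ (s-1)) x :=
        Real.hasDerivAt_rpow_const (Or.inl hx0)
      have h2 : HasDerivAt (fun y : ℝ => Real.exp (-y)) (-Real.exp (-x)) x := by
        convert (hasDerivAt_neg x).exp using 1; ring
      refine (HasDerivAt.hasDerivWithinAt ?_)
      convert h1.mul h2 using 1
      · rfl
      · rfl
      ring
    · exact ((lg_intble hs 0 z).const_mul s).sub (by simpa using lg_intble (by linarith : (0:ℝ) < s+1) 0 z)
  have h0 : (0:ℝ) ^ s = 0 := Real.zero_rpow hs.ne'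
  have hsplit : ∫ η in (0:ℝ)..z, (s * (η ^ (s-1) * Real.exp (-η)) - η ^ s * Real.exp (-η))
      = s * lowerGamma s z - lowerGamma (s+1) z := by
    rw [intervalIntegral.integral_sub ((lg_intble hs 0 z).const_mul s)
      (by simpa using lg_intble (by linarith : (0:ℝ) < s+1) 0 z),
      intervalIntegral.integral_const_mul]
    simp [lowerGamma]
  rw [hsplit, h0] at key
  linarith [key]

lemma g_summable {s z : ℝ} (hs : 0 < s) (hz : 0 < z) :
    Summable (fun n : ℕ => z ^ (s + n) / Real.Gamma (s + n + 1)) := by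
  apply summable_of_ratio_norm_eventually_le (r := 1/2) (by norm_num)
  filter_upwards [Filter.eventually_ge_atTop ⌈2*z⌉₊] with n hn
  have hn' : 2 * z ≤ (n : ℝ) := le_trans (Nat.le_ceil _) (by exact_mod_cast hn)
  have hpos : (0:ℝ) < s + n + 1 := by positivity
  have hG : (0:ℝ) < Real.Gamma (s + n + 1) := Real.Gamma_pos_of_pos hpos
  have hG2 : Real.Gamma (s + (n+1:ℕ) + 1) = (s + n + 1) * Real.Gamma (s + n + 1) := by
    push_cast
    rw [show s + ((n:ℝ)+1) + 1 = (s + n + 1) + 1 by ring, Real.Gamma_add_one hpos.ne']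
  have h1 : z ^ (s + (n+1:ℕ)) = z ^ (s + n) * z := by
    push_cast
    rw [show s + ((n:ℝ)+1) = (s + n) + 1 by ring, Real.rpow_add hz, Real.rpow_one]
  rw [Real.norm_of_nonneg (by positivity), Real.norm_of_nonneg (by positivity), hG2, h1]
  have e : z ^ (s + n) * z / ((s + n + 1) * Real.Gamma (s + n + 1))
      = z ^ (s + n) / Real.Gamma (s + n + 1) * (z / (s + n + 1)) := by
    field_simp
  rw [e, mul_comm (1/2 : ℝ)]
  apply mul_le_mul_of_nonneg_left _ (by positivity)
  rw [div_le_iff₀ hpos]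
  linarith

lemma lg_nonneg {s z : ℝ} (hz : 0 < z) : 0 ≤ lowerGamma s z := by
  apply intervalIntegral.integral_nonneg hz.le
  intro x hx
  have := hx.1
  positivity

lemma lg_le {s z : ℝ} (hs : 0 < s) (hz : 0 < z) : lowerGamma s z ≤ z ^ s / s := by
  have h : lowerGamma s z ≤ ∫ η in (0:ℝ)..z, η ^ (s-1) := by
    apply intervalIntegral.integral_mono_on hz.le
      ((intervalIntegral.intervalIntegrable_rpow' (by linarith)).mul_continuousOn
        (Real.continuous_exp.comp continuous_neg).continuousOn)
      (intervalIntegral.intervalIntegrable_rpow' (by linarith))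
    intro x hx
    nth_rewrite 2 [show x ^ (s-1) = x ^ (s-1) * 1 by ring]
    exact mul_le_mul_of_nonneg_left (Real.exp_le_one_iff.mpr (by simpa using hx.1))
      (Real.rpow_nonneg hx.1 _)
  rw [integral_rpow (Or.inl (by linarith))] at h
  simp only [sub_add_cancel] at h
  rwa [Real.zero_rpow hs.ne', sub_zero] at h

lemma lg_series {s z : ℝ} (hs : 0 < s) (hz : 0 < z) :
    lowerGamma s z = Real.Gamma s * Real.exp (-z) *
      ∑' n : ℕ, z ^ (s + n) / Real.Gamma (s + n + 1) := by
  have key : ∀ N : ℕ, lowerGamma s z = Real.Gamma s * Real.exp (-z) *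
      (∑ n ∈ Finset.range N, z ^ (s + n) / Real.Gamma (s + n + 1))
      + Real.Gamma s / Real.Gamma (s + N) * lowerGamma (s + N) z := by
    intro N
    induction N with
    | zero => simp [div_self (Real.Gamma_pos_of_pos hs).ne']
    | succ N ih =>
      have hsN : (0:ℝ) < s + N := by positivity
      have hrec := lg_rec hsN hz
      have hGrec : Real.Gamma (s + N + 1) = (s + N) * Real.Gamma (s + N) :=
        Real.Gamma_add_one hsN.ne'
      have hGN : (0:ℝ) < Real.Gamma (s + N) := Real.Gamma_pos_of_pos hsN
      have hstep : Real.Gamma s / Real.Gamma (s + N) * lowerGamma (s + N) z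
          = Real.Gamma s * Real.exp (-z) * (z ^ (s + (N:ℝ)) / Real.Gamma (s + N + 1))
            + Real.Gamma s / Real.Gamma (s + N + 1) * lowerGamma (s + N + 1) z := by
        rw [hrec, hGrec]
        field_simp
        ring
      rw [ih, hstep, Finset.sum_range_succ]
      push_cast
      rw [show s + ((N:ℝ)+1) = s + (N:ℝ) + 1 by ring]
      ring
  have hsum := g_summable hs hz
  have h1 : Tendsto (fun N => Real.Gamma s * Real.exp (-z) *
      (∑ n ∈ Finset.range N, z ^ (s + n) / Real.Gamma (s + n + 1))) atTop
      (nhds (Real.Gamma s * Real.exp (-z) * ∑' n : ℕ, z ^ (s + n) / Real.Gamma (s + n + 1))) :=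
    (hsum.hasSum.tendsto_sum_nat).const_mul _
  have h2 : Tendsto (fun N : ℕ => Real.Gamma s / Real.Gamma (s + N) * lowerGamma (s + N) z)
      atTop (nhds 0) := by
    have hterm : Tendsto (fun n : ℕ => Real.Gamma s * (z ^ (s + n) / Real.Gamma (s + n + 1)))
        atTop (nhds 0) := by
      simpa using hsum.tendsto_atTop_zero.const_mul (Real.Gamma s)
    apply squeeze_zero (fun n => ?_) (fun N => ?_) hterm
    · have hn : (0:ℝ) < s + n := by positivity
      exact mul_nonneg (div_nonneg (Real.Gamma_nonneg_of_nonneg hs.le)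
        (Real.Gamma_nonneg_of_nonneg hn.le)) (lg_nonneg hz)
    · have hsN : (0:ℝ) < s + N := by positivity
      have hGN : (0:ℝ) < Real.Gamma (s + N) := Real.Gamma_pos_of_pos hsN
      have hGs : (0:ℝ) < Real.Gamma s := Real.Gamma_pos_of_pos hs
      have hGrec : Real.Gamma (s + N + 1) = (s + N) * Real.Gamma (s + N) :=
        Real.Gamma_add_one hsN.ne'
      calc Real.Gamma s / Real.Gamma (s + N) * lowerGamma (s + N) z
          ≤ Real.Gamma s / Real.Gamma (s + N) * (z ^ (s + N) / (s + N)) :=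
            mul_le_mul_of_nonneg_left (lg_le hsN hz) (by positivity)
        _ = Real.Gamma s * (z ^ (s + N) / Real.Gamma (s + N + 1)) := by
            rw [hGrec]; field_simp
  have h3 : Tendsto (fun _ : ℕ => lowerGamma s z) atTop (nhds (lowerGamma s z)) :=
    tendsto_const_nhds
  have h4 := h1.add h2
  rw [add_zero] at h4
  apply tendsto_nhds_unique h3
  simpa only [← key] using h4

lemma point_eq {ν t ξ : ℝ} (hν : ν < 0) (ht : 0 < t) (hξ : 0 < ξ) (r : ℕ) {y : ℝ} (hy : 0 < y) :
    (1 / (2 * t)) * (y / ξ) ^ (ν / 2) * Real.exp (-(y + ξ) / (2 * t))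
      * ((Real.sqrt (y * ξ) / t / 2) ^ (2 * (r : ℝ) + -ν)
          / ((r.factorial : ℝ) * Real.Gamma ((r : ℝ) + 1 + -ν)))
    = (Real.exp (-(ξ / (2 * t)) + Real.log ξ * ((r : ℝ) + -ν)
          - Real.log (2 * t) * (2 * (r : ℝ) + -ν)) * (1 / (2 * t))
        / ((r.factorial : ℝ) * Real.Gamma ((r : ℝ) + 1 + -ν)))
      * (y ^ (((r : ℝ) + 1) - 1) * Real.exp (-((1 / (2 * t)) * y))) := by
  have h2t : (0:ℝ) < 2 * t := by linarith
  have hyξ : 0 < y / ξ := div_pos hy hξ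
  have hbase : Real.sqrt (y * ξ) / t / 2 = Real.sqrt (y * ξ) / (2 * t) := by
    rw [div_div]; ring_nf
  have hsq : 0 < Real.sqrt (y * ξ) / (2 * t) := div_pos (Real.sqrt_pos.mpr (by positivity)) h2t
  rw [hbase, Real.rpow_def_of_pos hyξ, Real.rpow_def_of_pos hsq, Real.rpow_def_of_pos hy,
    Real.log_div hy.ne' hξ.ne', Real.log_div (Real.sqrt_pos.mpr (by positivity : (0:ℝ) < y*ξ)).ne' h2t.ne',
    Real.log_sqrt (by positivity), Real.log_mul hy.ne' hξ.ne']
  rw [show (((r:ℝ)+1)-1) = (r:ℝ) by ring]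
  have h1 : ∀ A B C D c : ℝ, c * Real.exp A * Real.exp B * (Real.exp C / D)
      = Real.exp (A+B+C) * c / D := by
    intros; rw [Real.exp_add, Real.exp_add]; ring
  have h2 : ∀ E F G D c : ℝ, Real.exp E * c / D * (Real.exp F * Real.exp G)
      = Real.exp (E+F+G) * c / D := by
    intros; rw [Real.exp_add, Real.exp_add]; ring
  rw [h1, h2]
  have harg : (Real.log y - Real.log ξ) * (ν / 2) + -(y + ξ) / (2 * t)
        + ((Real.log y + Real.log ξ) / 2 - Real.log (2 * t)) * (2 * (r:ℝ) + -ν)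
      = (-(ξ / (2 * t)) + Real.log ξ * ((r:ℝ) + -ν) - Real.log (2 * t) * (2 * (r:ℝ) + -ν))
        + Real.log y * (r:ℝ) + -(1 / (2 * t) * y) := by
    field_simp
    ring
  rw [harg]

section main
variable {ν t ξ : ℝ} (hν : ν < 0) (ht : 0 < t) (hξ : 0 < ξ)

lemma Gamma_arg_pos (r : ℕ) (hν : ν < 0) : (0:ℝ) < (r:ℝ) + 1 + -ν := by
  have : (0:ℝ) ≤ (r:ℝ) := Nat.cast_nonneg r
  linarith

lemma term_nonneg (r : ℕ) {y : ℝ} (hy : 0 < y) (hν : ν < 0) (ht : 0 < t) (hξ : 0 < ξ) :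
    0 ≤ (1 / (2 * t)) * (y / ξ) ^ (ν / 2) * Real.exp (-(y + ξ) / (2 * t))
      * ((Real.sqrt (y * ξ) / t / 2) ^ (2 * (r : ℝ) + -ν)
          / ((r.factorial : ℝ) * Real.Gamma ((r : ℝ) + 1 + -ν))) := by
  rw [point_eq hν ht hξ r hy]
  have hΓ : (0:ℝ) < Real.Gamma ((r:ℝ) + 1 + -ν) := Real.Gamma_pos_of_pos (Gamma_arg_pos r hν)
  have hfac : (0:ℝ) < (r.factorial : ℝ) := by exact_mod_cast r.factorial_pos
  apply mul_nonneg
  · exact div_nonneg (mul_nonneg (Real.exp_pos _).le (by positivity)) (by positivity)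
  · exact mul_nonneg (Real.rpow_nonneg hy.le _) (Real.exp_pos _).le

lemma base_intble (r : ℕ) (ht : 0 < t) :
    IntegrableOn (fun y : ℝ => y ^ (((r:ℝ) + 1) - 1) * Real.exp (-((1 / (2 * t)) * y)))
      (Ioi 0) volume := by
  have h := integrableOn_rpow_mul_exp_neg_mul_rpow (p := 1) (s := (r:ℝ)) (b := 1/(2*t))
    ((neg_lt_zero.mpr one_pos).trans_le (Nat.cast_nonneg r)) one_pos (by positivity)
  simp only [Real.rpow_one] at h
  refine h.congr_fun (fun y hy => ?_) measurableSet_Ioi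
  simp only [neg_mul]
  norm_num

lemma term_intble (r : ℕ) (hν : ν < 0) (ht : 0 < t) (hξ : 0 < ξ) :
    IntegrableOn (fun y : ℝ => (1 / (2 * t)) * (y / ξ) ^ (ν / 2) * Real.exp (-(y + ξ) / (2 * t))
      * ((Real.sqrt (y * ξ) / t / 2) ^ (2 * (r : ℝ) + -ν)
          / ((r.factorial : ℝ) * Real.Gamma ((r : ℝ) + 1 + -ν)))) (Ioi 0) volume := by
  have h := ((base_intble (t := t) r ht).const_mul
    (Real.exp (-(ξ / (2 * t)) + Real.log ξ * ((r : ℝ) + -ν)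
          - Real.log (2 * t) * (2 * (r : ℝ) + -ν)) * (1 / (2 * t))
        / ((r.factorial : ℝ) * Real.Gamma ((r : ℝ) + 1 + -ν))))
  exact MeasureTheory.IntegrableOn.congr_fun h (fun y hy => (point_eq hν ht hξ r hy).symm) measurableSet_Ioi

lemma term_integral (r : ℕ) (hν : ν < 0) (ht : 0 < t) (hξ : 0 < ξ) :
    ∫ y in Ioi (0:ℝ), (1 / (2 * t)) * (y / ξ) ^ (ν / 2) * Real.exp (-(y + ξ) / (2 * t))
      * ((Real.sqrt (y * ξ) / t / 2) ^ (2 * (r : ℝ) + -ν)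
          / ((r.factorial : ℝ) * Real.Gamma ((r : ℝ) + 1 + -ν)))
    = Real.exp (-(ξ / (2 * t))) * ((ξ / (2 * t)) ^ (-ν + (r:ℝ)) / Real.Gamma (-ν + (r:ℝ) + 1)) := by
  have h2t : (0:ℝ) < 2 * t := by linarith
  have hΓ : (0:ℝ) < Real.Gamma ((r:ℝ) + 1 + -ν) := Real.Gamma_pos_of_pos (Gamma_arg_pos r hν)
  have hfac : (0:ℝ) < (r.factorial : ℝ) := by exact_mod_cast r.factorial_pos
  rw [setIntegral_congr_fun measurableSet_Ioi (fun y hy => point_eq hν ht hξ r hy),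
    MeasureTheory.integral_const_mul,
    integral_rpow_mul_exp_neg_mul_Ioi (by positivity : (0:ℝ) < (r:ℝ) + 1) (by positivity : (0:ℝ) < 1/(2*t)),
    one_div_one_div]
  rw [Real.Gamma_nat_eq_factorial r]
  rw [show -ν + (r:ℝ) + 1 = (r:ℝ) + 1 + -ν by ring]
  rw [Real.rpow_def_of_pos h2t, Real.rpow_def_of_pos (by positivity : (0:ℝ) < ξ/(2*t)),
    Real.log_div hξ.ne' h2t.ne']
  have h1 : ∀ A B c d : ℝ, A ≠ 0 →
      Real.exp B * c / (A * d) * (Real.exp (Real.log (2*t) * ((r:ℝ)+1)) * A)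
      = Real.exp (B + Real.log (2*t) * ((r:ℝ)+1)) * c / d := by
    intro A B c d hA
    rw [Real.exp_add]
    have e1 : Real.exp B * c / (A * d) * (Real.exp (Real.log (2*t) * ((r:ℝ)+1)) * A)
        = Real.exp B * Real.exp (Real.log (2*t) * ((r:ℝ)+1)) * c * (A / (A * d)) := by ring
    rw [e1, div_mul_cancel_left₀ hA, ← div_eq_mul_inv, mul_div_assoc]
  rw [h1 _ _ _ _ hfac.ne']
  rw [show Real.exp (-(ξ / (2 * t))) * (Real.exp ((Real.log ξ - Real.log (2*t)) * (-ν + (r:ℝ)))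
        / Real.Gamma ((r:ℝ) + 1 + -ν))
      = Real.exp (-(ξ / (2 * t)) + (Real.log ξ - Real.log (2*t)) * (-ν + (r:ℝ))) * 1
        / Real.Gamma ((r:ℝ) + 1 + -ν) by rw [Real.exp_add]; ring]
  rw [show (-(ξ / (2 * t)) + Real.log ξ * ((r : ℝ) + -ν) - Real.log (2 * t) * (2 * (r : ℝ) + -ν))
        + Real.log (2*t) * ((r:ℝ)+1)
      = (-(ξ / (2 * t)) + (Real.log ξ - Real.log (2*t)) * (-ν + (r:ℝ))) + Real.log (2*t) by ring]
  rw [Real.exp_add, Real.exp_log h2t]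
  field_simp

end main

theorem feller_fundamental_solution_mass_deficit
    (ν : ℝ) (hν : ν < 0) (t ξ : ℝ) (ht : 0 < t) (hξ : 0 < ξ) :
    (∫ y in Set.Ioi (0:ℝ),
        (1 / (2 * t)) * (y / ξ) ^ (ν / 2) * Real.exp (-(y + ξ) / (2 * t))
          * besselI |ν| (Real.sqrt (y * ξ) / t))
      = lowerGamma (-ν) (ξ / (2 * t)) / Real.Gamma (-ν) ∧
    lowerGamma (-ν) (ξ / (2 * t)) / Real.Gamma (-ν) < 1 := by
  have hm : 0 < -ν := neg_pos.mpr hν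
  have h2t : (0:ℝ) < 2 * t := by linarith
  have hz : 0 < ξ / (2 * t) := by positivity
  have hΓ : 0 < Real.Gamma (-ν) := Real.Gamma_pos_of_pos hm
  constructor
  · rw [abs_of_neg hν]
    have hrw : ∀ y : ℝ, (1 / (2 * t)) * (y / ξ) ^ (ν / 2) * Real.exp (-(y + ξ) / (2 * t))
          * besselI (-ν) (Real.sqrt (y * ξ) / t)
        = ∑' r : ℕ, (1 / (2 * t)) * (y / ξ) ^ (ν / 2) * Real.exp (-(y + ξ) / (2 * t))
          * ((Real.sqrt (y * ξ) / t / 2) ^ (2 * (r:ℝ) + -ν)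
              / ((r.factorial:ℝ) * Real.Gamma ((r:ℝ) + 1 + -ν))) := by
      intro y
      rw [besselI, ← tsum_mul_left]
    rw [MeasureTheory.setIntegral_congr_fun measurableSet_Ioi (fun y _ => hrw y)]
    have hInt : ∀ r : ℕ, Integrable (fun y : ℝ =>
        (1 / (2 * t)) * (y / ξ) ^ (ν / 2) * Real.exp (-(y + ξ) / (2 * t))
          * ((Real.sqrt (y * ξ) / t / 2) ^ (2 * (r:ℝ) + -ν)
              / ((r.factorial:ℝ) * Real.Gamma ((r:ℝ) + 1 + -ν))))
        (volume.restrict (Ioi 0)) := fun r => term_intble r hν ht hξ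
    have hnorm : ∀ r : ℕ, (∫ y in Ioi (0:ℝ), ‖(1 / (2 * t)) * (y / ξ) ^ (ν / 2)
          * Real.exp (-(y + ξ) / (2 * t))
          * ((Real.sqrt (y * ξ) / t / 2) ^ (2 * (r:ℝ) + -ν)
              / ((r.factorial:ℝ) * Real.Gamma ((r:ℝ) + 1 + -ν)))‖)
        = Real.exp (-(ξ / (2 * t))) * ((ξ / (2 * t)) ^ (-ν + (r:ℝ)) / Real.Gamma (-ν + (r:ℝ) + 1)) := by
      intro r
      rw [MeasureTheory.setIntegral_congr_fun measurableSet_Ioi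
        (fun y hy => Real.norm_of_nonneg (term_nonneg r hy hν ht hξ))]
      exact term_integral r hν ht hξ
    have hSum : Summable (fun r : ℕ => ∫ y in Ioi (0:ℝ), ‖(1 / (2 * t)) * (y / ξ) ^ (ν / 2)
          * Real.exp (-(y + ξ) / (2 * t))
          * ((Real.sqrt (y * ξ) / t / 2) ^ (2 * (r:ℝ) + -ν)
              / ((r.factorial:ℝ) * Real.Gamma ((r:ℝ) + 1 + -ν)))‖) := by
      simp_rw [hnorm]
      exact (g_summable hm hz).mul_left _
    rw [← MeasureTheory.integral_tsum_of_summable_integral_norm hInt hSum]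
    calc ∑' r : ℕ, ∫ y in Ioi (0:ℝ), (1 / (2 * t)) * (y / ξ) ^ (ν / 2)
          * Real.exp (-(y + ξ) / (2 * t))
          * ((Real.sqrt (y * ξ) / t / 2) ^ (2 * (r:ℝ) + -ν)
              / ((r.factorial:ℝ) * Real.Gamma ((r:ℝ) + 1 + -ν)))
        = ∑' r : ℕ, Real.exp (-(ξ / (2 * t)))
            * ((ξ / (2 * t)) ^ (-ν + (r:ℝ)) / Real.Gamma (-ν + (r:ℝ) + 1)) :=
          tsum_congr (fun r => term_integral r hν ht hξ)
      _ = Real.exp (-(ξ / (2 * t)))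
            * ∑' r : ℕ, (ξ / (2 * t)) ^ (-ν + (r:ℝ)) / Real.Gamma (-ν + (r:ℝ) + 1) :=
          tsum_mul_left
      _ = lowerGamma (-ν) (ξ / (2 * t)) / Real.Gamma (-ν) := by
          rw [lg_series hm hz]
          field_simp
  · rw [div_lt_one hΓ]
    have hint : IntegrableOn (fun x : ℝ => Real.exp (-x) * x ^ (-ν - 1)) (Ioi 0) volume :=
      Real.GammaIntegral_convergent hm
    have hlg : lowerGamma (-ν) (ξ / (2 * t))
        = ∫ x in Ioc (0:ℝ) (ξ / (2 * t)), Real.exp (-x) * x ^ (-ν - 1) := by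
      rw [lowerGamma, intervalIntegral.integral_of_le hz.le]
      exact MeasureTheory.setIntegral_congr_fun measurableSet_Ioc fun x _ => mul_comm _ _
    have hsplit : Real.Gamma (-ν)
        = (∫ x in Ioc (0:ℝ) (ξ / (2 * t)), Real.exp (-x) * x ^ (-ν - 1))
          + ∫ x in Ioi (ξ / (2 * t)), Real.exp (-x) * x ^ (-ν - 1) := by
      rw [Real.Gamma_eq_integral hm, ← Ioc_union_Ioi_eq_Ioi hz.le,
        MeasureTheory.setIntegral_union (Ioc_disjoint_Ioi le_rfl) measurableSet_Ioi
          (hint.mono_set Ioc_subset_Ioi_self) (hint.mono_set (Ioi_subset_Ioi hz.le))]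
    have hpos : 0 < ∫ x in Ioi (ξ / (2 * t)), Real.exp (-x) * x ^ (-ν - 1) := by
      rw [MeasureTheory.setIntegral_pos_iff_support_of_nonneg_ae ?_ 
        (hint.mono_set (Ioi_subset_Ioi hz.le))]
      · have hsub : Ioi (ξ / (2 * t)) ⊆ Function.support (fun x : ℝ => Real.exp (-x) * x ^ (-ν - 1)) := by
          intro x hx
          have hx0 : 0 < x := hz.trans hx
          exact ne_of_gt (mul_pos (Real.exp_pos _) (Real.rpow_pos_of_pos hx0 _))
        calc (0:ENNReal) < volume (Ioi (ξ / (2 * t))) := by rw [Real.volume_Ioi]; exact ENNReal.zero_lt_top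
          _ ≤ volume (Function.support (fun x : ℝ => Real.exp (-x) * x ^ (-ν - 1)) ∩ Ioi (ξ / (2 * t))) :=
            measure_mono (subset_inter hsub (subset_refl _))
      · filter_upwards [ae_restrict_mem measurableSet_Ioi] with x hx
        exact mul_nonneg (Real.exp_pos _).le (Real.rpow_nonneg (hz.trans hx).le _)
    linarith [hlg, hsplit, hpos]
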